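/- Let U be a finite set of actions, H a finite set of hypotheses, h ∈ H, θ ≥ 0, and let d : H × H × U → ℝ be nonnegative (where d(h, g; x) = (μ(x,h) − μ(x,g))² measures the squared mean separation of hypotheses h and g under action x). Define f^h(S) = Σ_{g ∈ H, g ≠ h} min(θ, Σ_{x ∈ S} d(h, g; x)) for S ⊆ U. Then f^h is monotone and submodular: for all S ⊆ T ⊆ U and all e ∈ U, f^h(S ∪ {e}) − f^h(S) ≥ f^h(T ∪ {e}) − f^h(T). -/
import Mathlib


/-- The truncated aggregate separation function of hypothesis `h`:
`f^h(S) = Σ_{g ≠ h} min(θ, Σ_{x ∈ S} d(h, g; x))`. -/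
def aggSep {α β : Type*} [Fintype β] [DecidableEq β]
    (d : β → β → α → ℝ) (θ : ℝ) (h : β) (S : Finset α) : ℝ :=
  ∑ g ∈ Finset.univ.erase h, min θ (∑ x ∈ S, d h g x)

lemma min_concave (θ a b c : ℝ) (hab : a ≤ b) (hc : 0 ≤ c) :
    min θ (b + c) - min θ b ≤ min θ (a + c) - min θ a := by
  simp only [min_def]; split_ifs <;> linarith

/-- For a finite set of actions `α`, a finite set of hypotheses `β`, a hypothesis `h`,
a threshold `θ ≥ 0`, and nonnegative separations `d(h, g; x)`, the truncated aggregate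
separation `f^h(S) = Σ_{g ≠ h} min(θ, Σ_{x ∈ S} d(h, g; x))` is monotone and
submodular. -/
theorem aggSep_monotone_submodular {α β : Type*} [Fintype α] [DecidableEq α]
    [Fintype β] [DecidableEq β]
    (d : β → β → α → ℝ) (hd : ∀ g g' x, 0 ≤ d g g' x) (θ : ℝ) (hθ : 0 ≤ θ) (h : β) :
    (∀ S T : Finset α, S ⊆ T → aggSep d θ h S ≤ aggSep d θ h T) ∧
    (∀ S T : Finset α, S ⊆ T → ∀ e : α,
      aggSep d θ h (T ∪ {e}) - aggSep d θ h T
        ≤ aggSep d θ h (S ∪ {e}) - aggSep d θ h S) := by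
  constructor
  · intro S T hST
    apply Finset.sum_le_sum
    intro g _
    exact min_le_min le_rfl (Finset.sum_le_sum_of_subset_of_nonneg hST
      (fun x _ _ => hd h g x))
  · intro S T hST e
    unfold aggSep
    rw [← Finset.sum_sub_distrib, ← Finset.sum_sub_distrib]
    apply Finset.sum_le_sum
    intro g _
    have hab : ∑ x ∈ S, d h g x ≤ ∑ x ∈ T, d h g x :=
      Finset.sum_le_sum_of_subset_of_nonneg hST (fun x _ _ => hd h g x)
    by_cases heS : e ∈ S
    · have heT : e ∈ T := hST heS
      rw [Finset.union_eq_left.mpr (by simpa using heT),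
        Finset.union_eq_left.mpr (by simpa using heS)]
      simp
    · have hSe : ∑ x ∈ S ∪ {e}, d h g x = (∑ x ∈ S, d h g x) + d h g e := by
        rw [show S ∪ {e} = insert e S by ext x; simp [or_comm],
          Finset.sum_insert heS]; ring
      by_cases heT : e ∈ T
      · rw [Finset.union_eq_left.mpr (by simpa using heT), hSe]
        have : min θ (∑ x ∈ S, d h g x) ≤ min θ ((∑ x ∈ S, d h g x) + d h g e) :=
          min_le_min le_rfl (by linarith [hd h g e])
        linarith
      · have hTe : ∑ x ∈ T ∪ {e}, d h g x = (∑ x ∈ T, d h g x) + d h g e := by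
          rw [show T ∪ {e} = insert e T by ext x; simp [or_comm],
            Finset.sum_insert heT]; ring
        rw [hSe, hTe]
        exact min_concave θ _ _ _ hab (hd h g e)
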